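/- Let T_{u,v} and T_{w,x} be infinitesimal Siegel transvections in o(V,B) whose corresponding isotropic planes ℓ = span(u,v) and m = span(w,x) satisfy ℓ ∩ m ≠ 0 and ℓ ≠ m. Then the Lie algebra generated by T_{u,v} and T_{w,x} is two-dimensional. -/

import Mathlib

open Module

section Helpers
variable {F V : Type*} [Field F] [AddCommGroup V] [Module F V]

lemma exists_dual_pair [FiniteDimensional F V] (B : LinearMap.BilinForm F V)
    (hBnd : B.Nondegenerate) {p q : V} (h : LinearIndependent F ![p, q]) :
    ∃ y : V, B y p = 1 ∧ B y q = 0 := by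
  have hpq : p ≠ q := by
    intro hpq
    have := h.injective (show ![p,q] 0 = ![p,q] 1 by simpa using hpq)
    simp at this
  have hs : LinearIndepOn F id (Set.range ![p,q]) := (linearIndepOn_id_range_iff h.injective).mpr h
  let bb := Basis.extend hs
  have hpmem : p ∈ hs.extend (Set.subset_univ _) := hs.subset_extend _ ⟨0, by simp⟩
  have hqmem : q ∈ hs.extend (Set.subset_univ _) := hs.subset_extend _ ⟨1, by simp⟩
  have hbp : bb ⟨p, hpmem⟩ = p := Basis.extend_apply_self hs ⟨p, hpmem⟩
  have hbq : bb ⟨q, hqmem⟩ = q := Basis.extend_apply_self hs ⟨q, hqmem⟩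
  refine ⟨(B.toDual hBnd).symm (bb.coord ⟨p, hpmem⟩), ?_, ?_⟩
  · have h1 : B ((B.toDual hBnd).symm (bb.coord ⟨p, hpmem⟩)) p
        = bb.coord ⟨p, hpmem⟩ p := by
      rw [← LinearMap.BilinForm.toDual_def hBnd, LinearEquiv.apply_symm_apply]
    have h2 : bb.coord ⟨p, hpmem⟩ (bb ⟨p, hpmem⟩) = 1 := by simp
    rw [hbp] at h2
    rw [h1, h2]
  · have h1 : B ((B.toDual hBnd).symm (bb.coord ⟨p, hpmem⟩)) q
        = bb.coord ⟨p, hpmem⟩ q := by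
      rw [← LinearMap.BilinForm.toDual_def hBnd, LinearEquiv.apply_symm_apply]
    have h2 : bb.coord ⟨p, hpmem⟩ (bb ⟨q, hqmem⟩) = 0 := by
      rw [Basis.coord_apply, Basis.repr_self, Finsupp.single_apply_eq_zero]
      intro hh
      exact (hpq (congrArg Subtype.val hh)).elim
    rw [hbq] at h2
    rw [h1, h2]

lemma pair_swap {p q : V} (h : LinearIndependent F ![p, q]) :
    LinearIndependent F ![q, p] := by
  rw [LinearIndependent.pair_iff] at h ⊢
  intro s t hst
  have := h t s (by rw [add_comm]; exact hst)
  exact ⟨this.2, this.1⟩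

lemma range_pair (p q : V) : Set.range ![p, q] = {p, q} := by
  simp [Matrix.range_cons, Matrix.range_empty]
  exact Set.pair_comm q p

lemma finrank_span_pair {F W : Type*} [Field F] [AddCommGroup W] [Module F W] {p q : W}
    (h : LinearIndependent F ![p, q]) :
    Module.finrank F (Submodule.span F ({p, q} : Set W)) = 2 := by
  rw [← range_pair p q, finrank_span_eq_card h]
  simp

lemma siegel_commute (B : LinearMap.BilinForm F V) (hBsymm : ∀ a b : V, B a b = B b a)
    (e a b : V) (hee : B e e = 0) (hea : B e a = 0) (heb : B e b = 0) :
    Commute ((B a).smulRight e - (B e).smulRight a : Module.End F V)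
      ((B b).smulRight e - (B e).smulRight b) := by
  have hae : B a e = 0 := (hBsymm a e).trans hea
  have hbe : B b e = 0 := (hBsymm b e).trans heb
  show _ * _ = _ * _
  ext y
  simp only [Module.End.mul_apply, LinearMap.sub_apply, LinearMap.smulRight_apply,
    map_sub, map_smul, smul_eq_mul, smul_sub, smul_smul]
  rw [hee, hea, heb, hae, hbe, hBsymm b a]
  simp [mul_comm]

lemma siegel_decomp (B : LinearMap.BilinForm F V)
    (u v e : V) (s t : F) (he : s • u + t • v = e) (hst : ¬(s = 0 ∧ t = 0)) :
    ∃ (c : F) (a : V), (a = u ∨ a = v) ∧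
      ((B u).smulRight v - (B v).smulRight u : Module.End F V)
        = c • ((B a).smulRight e - (B e).smulRight a) := by
  by_cases ht : t = 0
  · have hs : s ≠ 0 := fun h => hst ⟨h, ht⟩
    refine ⟨-s⁻¹, v, Or.inr rfl, ?_⟩
    ext y
    subst he
    subst ht
    simp only [LinearMap.smul_apply, LinearMap.sub_apply, LinearMap.smulRight_apply,
      map_add, map_smul, LinearMap.add_apply, smul_eq_mul, zero_smul, add_zero]
    match_scalars <;> field_simp
  · refine ⟨t⁻¹, u, Or.inl rfl, ?_⟩
    ext y
    subst he
    simp only [LinearMap.smul_apply, LinearMap.sub_apply, LinearMap.smulRight_apply,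
      map_add, map_smul, LinearMap.add_apply, smul_eq_mul]
    match_scalars <;> field_simp <;> ring

end Helpers

attribute [local instance 100] LieRing.ofAssociativeRing

/-- two infinitesimal Siegel transvections whose isotropic planes meet
in a point (nonzero intersection, distinct planes) generate a two-dimensional Lie
algebra. -/
theorem siegel_transvections_meeting_planes {F V : Type*} [Field F]
    [AddCommGroup V] [Module F V] [FiniteDimensional F V]
    (h2 : (2 : F) ≠ 0) (B : LinearMap.BilinForm F V)
    (hBsymm : ∀ a b : V, B a b = B b a) (hBnd : B.Nondegenerate)
    (u v : V) (hind : LinearIndependent F ![u, v])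
    (huu : B u u = 0) (huv : B u v = 0) (hvv : B v v = 0)
    (w x : V) (hind' : LinearIndependent F ![w, x])
    (hww : B w w = 0) (hwx : B w x = 0) (hxx : B x x = 0)
    (hmeet : (Submodule.span F {u, v} : Submodule F V) ⊓ Submodule.span F {w, x} ≠ ⊥)
    (hne : (Submodule.span F {u, v} : Submodule F V) ≠ Submodule.span F {w, x}) :
    Module.finrank F
      (LieSubalgebra.lieSpan F (Module.End F V)
        {(B u).smulRight v - (B v).smulRight u,
         (B w).smulRight x - (B x).smulRight w}) = 2 := by
  set T1 : Module.End F V := (B u).smulRight v - (B v).smulRight u with hT1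
  set T2 : Module.End F V := (B w).smulRight x - (B x).smulRight w with hT2
  have hvu : B v u = 0 := (hBsymm v u).trans huv
  have hxw : B x w = 0 := (hBsymm x w).trans hwx
  -- get a nonzero common vector e
  obtain ⟨e, hel, he0⟩ := Submodule.exists_mem_ne_zero_of_ne_bot hmeet
  obtain ⟨helm, hemm⟩ := Submodule.mem_inf.mp hel
  obtain ⟨s, t, he⟩ := Submodule.mem_span_pair.mp helm
  obtain ⟨s', t', he'⟩ := Submodule.mem_span_pair.mp hemm
  have hst : ¬(s = 0 ∧ t = 0) := by
    rintro ⟨rfl, rfl⟩; simp at he; exact he0 he.symm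
  have hst' : ¬(s' = 0 ∧ t' = 0) := by
    rintro ⟨rfl, rfl⟩; simp at he'; exact he0 he'.symm
  -- e is orthogonal to everything in both planes
  have heu : B e u = 0 := by rw [← he]; simp [huu, hvu]
  have hev : B e v = 0 := by rw [← he]; simp [huv, hvv]
  have hew : B e w = 0 := by rw [← he']; simp [hww, hxw]
  have hex : B e x = 0 := by rw [← he']; simp [hwx, hxx]
  have hue : B u e = 0 := (hBsymm u e).trans heu
  have hve : B v e = 0 := (hBsymm v e).trans hev
  have hee : B e e = 0 := by
    conv_lhs => rw [← he]
    simp [huu, huv, hvu, hvv]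
  -- T1 and T2 commute
  obtain ⟨c, a, ha, hT1d⟩ := siegel_decomp B u v e s t he hst
  obtain ⟨d, b, hb, hT2d⟩ := siegel_decomp B w x e s' t' he' hst'
  have hea : B e a = 0 := by rcases ha with rfl | rfl; exacts [heu, hev]
  have heb : B e b = 0 := by rcases hb with rfl | rfl; exacts [hew, hex]
  have hcomm : Commute T1 T2 := by
    rw [hT1, hT2, hT1d, hT2d]
    have h := siegel_commute B hBsymm e a b hee hea heb
    show _ * _ = _ * _
    rw [smul_mul_assoc, mul_smul_comm, smul_mul_assoc, mul_smul_comm, h, smul_comm]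
  -- linear independence of T1, T2
  obtain ⟨y1, hy1u, hy1v⟩ := exists_dual_pair B hBnd hind
  obtain ⟨y2, hy2v, hy2u⟩ := exists_dual_pair B hBnd (pair_swap hind)
  obtain ⟨y3, hy3w, hy3x⟩ := exists_dual_pair B hBnd hind'
  have hT1y1 : T1 y1 = v := by
    simp [hT1, LinearMap.smulRight_apply, hBsymm u y1 ▸ hy1u, hBsymm v y1 ▸ hy1v]
  have hT1y2 : T1 y2 = -u := by
    simp [hT1, LinearMap.smulRight_apply, hBsymm u y2 ▸ hy2u, hBsymm v y2 ▸ hy2v]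
  have hT2y3 : T2 y3 = x := by
    simp [hT2, LinearMap.smulRight_apply, hBsymm w y3 ▸ hy3w, hBsymm x y3 ▸ hy3x]
  have hT2mem : ∀ y : V, T2 y ∈ Submodule.span F ({w, x} : Set V) := by
    intro y
    simp only [hT2, LinearMap.sub_apply, LinearMap.smulRight_apply]
    exact sub_mem
      (Submodule.smul_mem _ _ (Submodule.subset_span (Set.mem_insert_iff.mpr (Or.inr rfl))))
      (Submodule.smul_mem _ _ (Submodule.subset_span (Set.mem_insert _ _)))
  have hTind : LinearIndependent F ![T1, T2] := by
    rw [LinearIndependent.pair_iff]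
    intro sc tc hstc
    have hsc : sc = 0 := by
      by_contra hsc
      have key : ∀ y : V, T1 y ∈ Submodule.span F ({w, x} : Set V) := by
        intro y
        have : T1 y = (-(sc⁻¹ * tc)) • T2 y := by
          have := congrFun (congrArg (DFunLike.coe) hstc) y
          simp only [LinearMap.add_apply, LinearMap.smul_apply, LinearMap.zero_apply] at this
          have h3 : sc • T1 y = -(tc • T2 y) := by linear_combination (norm := module) this
          calc T1 y = sc⁻¹ • (sc • T1 y) := by rw [smul_smul, inv_mul_cancel₀ hsc, one_smul]
          _ = (-(sc⁻¹ * tc)) • T2 y := by rw [h3]; module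
        rw [this]
        exact Submodule.smul_mem _ _ (hT2mem y)
      have hv : v ∈ Submodule.span F ({w, x} : Set V) := hT1y1 ▸ key y1
      have hu : u ∈ Submodule.span F ({w, x} : Set V) := by
        have := key y2
        rw [hT1y2] at this
        simpa using Submodule.neg_mem _ this
      have hle : Submodule.span F ({u, v} : Set V) ≤ Submodule.span F ({w, x} : Set V) := by
        rw [Submodule.span_le]
        rintro z (rfl | rfl)
        · exact hu
        · exact hv
      exact hne (Submodule.eq_of_le_of_finrank_le hle
        (by rw [finrank_span_pair hind, finrank_span_pair hind']))
    subst hsc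
    refine ⟨rfl, ?_⟩
    simp only [zero_smul, zero_add] at hstc
    have := congrFun (congrArg (DFunLike.coe) hstc) y3
    simp only [LinearMap.smul_apply, LinearMap.zero_apply, hT2y3] at this
    have hx0 : x ≠ 0 := by
      have := hind'.ne_zero 1
      simpa using this
    exact (smul_eq_zero.mp this).resolve_right hx0
  -- the span is a Lie subalgebra
  have hcommSpan : ∀ z1 ∈ Submodule.span F ({T1, T2} : Set (Module.End F V)),
      ∀ z2 ∈ Submodule.span F ({T1, T2} : Set (Module.End F V)), Commute z1 z2 := by
    have base : ∀ g ∈ ({T1, T2} : Set (Module.End F V)),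
        ∀ z ∈ Submodule.span F ({T1, T2} : Set (Module.End F V)), Commute g z := by
      rintro g (rfl | rfl) z hz
      · induction hz using Submodule.span_induction with
        | mem z hz => rcases hz with rfl | rfl; exacts [Commute.refl _, hcomm]
        | zero => exact Commute.zero_right _
        | add _ _ _ _ h1 h2 => exact h1.add_right h2
        | smul c _ _ h1 => exact h1.smul_right c
      · induction hz using Submodule.span_induction with
        | mem z hz => rcases hz with rfl | rfl; exacts [hcomm.symm, Commute.refl _]
        | zero => exact Commute.zero_right _
        | add _ _ _ _ h1 h2 => exact h1.add_right h2
        | smul c _ _ h1 => exact h1.smul_right c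
    intro z1 hz1 z2 hz2
    induction hz1 using Submodule.span_induction with
    | mem g hg => exact base g hg z2 hz2
    | zero => exact Commute.zero_left _
    | add _ _ _ _ h1 h2 => exact h1.add_left h2
    | smul c _ _ h1 => exact h1.smul_left c
  set K : LieSubalgebra F (Module.End F V) :=
    { Submodule.span F ({T1, T2} : Set (Module.End F V)) with
      lie_mem' := by
        intro z1 z2 h1 h2
        have : ⁅z1, z2⁆ = 0 := by
          rw [Ring.lie_def, sub_eq_zero]
          exact hcommSpan z1 h1 z2 h2
        rw [this]
        exact Submodule.zero_mem _ } with hK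
  have hKle : LieSubalgebra.lieSpan F (Module.End F V) {T1, T2} ≤ K :=
    LieSubalgebra.lieSpan_le.mpr Submodule.subset_span
  have hleK : (Submodule.span F ({T1, T2} : Set (Module.End F V)))
      ≤ (LieSubalgebra.lieSpan F (Module.End F V) {T1, T2}).toSubmodule :=
    Submodule.span_le.mpr LieSubalgebra.subset_lieSpan
  have heq : (LieSubalgebra.lieSpan F (Module.End F V) {T1, T2}).toSubmodule
      = Submodule.span F ({T1, T2} : Set (Module.End F V)) :=
    le_antisymm (fun z hz => hKle hz) hleK
  have : finrank F ((LieSubalgebra.lieSpan F (Module.End F V) {T1, T2}).toSubmodule) = 2 := by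
    rw [heq]
    exact finrank_span_pair hTind
  exact this
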